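/- For positive integers k ≤ n, the number of Dyck paths of semilength n with exactly k returns (down steps touching the x-axis) equals (k/n) · C(2n-k-1, n-1). -/

import Mathlib

/-- Number of up steps (`true`) in a list of steps. -/
def upCount (L : List Bool) : ℕ := (L.filter id).length

/-- A Dyck path of semilength `n`: `2n` steps (`true` = up, `false` = down),
`n` up steps, every prefix has at least as many ups as downs. -/
def IsDyck (n : ℕ) (L : List Bool) : Prop :=
  L.length = 2 * n ∧ upCount L = n ∧ ∀ k, k ≤ L.length → k ≤ 2 * upCount (L.take k)

/-- The number of returns: down steps ending on the x-axis. -/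
def returns (L : List Bool) : ℕ :=
  ((List.range L.length).filter
    (fun j => L.getD j true = false ∧ 2 * upCount (L.take (j + 1)) = j + 1)).length

@[simp] lemma upCount_nil : upCount [] = 0 := rfl

@[simp] lemma upCount_cons (b : Bool) (L : List Bool) :
    upCount (b :: L) = (if b then 1 else 0) + upCount L := by
  cases b <;> simp [upCount] <;> omega

@[simp] lemma upCount_append (A B : List Bool) :
    upCount (A ++ B) = upCount A + upCount B := by
  simp [upCount, List.filter_append]

lemma returns_eq_countP (L : List Bool) :
    returns L = (List.range L.length).countP
      (fun j => L.getD j true = false ∧ 2 * upCount (L.take (j + 1)) = j + 1) := by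
  rw [returns, List.countP_eq_length_filter]

lemma returns_append (A B : List Bool) (hA : 2 * upCount A = A.length) :
    returns (A ++ B) = returns A + returns B := by
  simp only [returns_eq_countP, List.length_append]
  rw [List.range_add, List.countP_append, List.countP_map]
  congr 1
  · apply List.countP_congr
    intro j hj
    rw [List.mem_range] at hj
    have h1 : (A ++ B).getD j true = A.getD j true := List.getD_append _ _ _ _ hj
    have h2 : (A ++ B).take (j + 1) = A.take (j + 1) :=
      List.take_append_of_le_length (by omega)
    rw [h1, h2]
  · apply List.countP_congr
    intro j hj
    rw [List.mem_range] at hj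
    simp only [Function.comp_apply]
    have h1 : (A ++ B).getD (A.length + j) true = B.getD j true := by
      rw [List.getD_append_right _ _ _ _ (by omega)]
      congr 1
      omega
    have h2 : (A ++ B).take (A.length + j + 1) = A ++ B.take (j + 1) := by
      rw [List.take_append, List.take_of_length_le (by omega)]
      congr 2
      omega
    rw [h1, h2, upCount_append]
    simp only [decide_eq_true_eq]
    constructor <;> rintro ⟨hd, he⟩ <;> exact ⟨hd, by omega⟩

lemma returns_arch (D : List Bool) (hbal : 2 * upCount D = D.length)
    (hpos : ∀ i, i ≤ D.length → i ≤ 2 * upCount (D.take i)) :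
    returns (true :: (D ++ [false])) = 1 := by
  set L := true :: (D ++ [false]) with hL
  have hlen : L.length = D.length + 2 := by simp [hL]
  rw [returns_eq_countP, hlen, List.range_succ, List.countP_append]
  have h1 : (List.range (D.length + 1)).countP
      (fun j => L.getD j true = false ∧ 2 * upCount (L.take (j + 1)) = j + 1) = 0 := by
    rw [List.countP_eq_zero]
    intro j hj
    rw [List.mem_range] at hj
    simp only [decide_eq_true_eq, not_and]
    match j with
    | 0 =>
      intro hfalse
      rw [hL] at hfalse
      simp at hfalse
    | (i + 1) =>
      intro _
      have hi : i + 1 ≤ D.length := by omega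
      have h2 : L.take (i + 1 + 1) = true :: D.take (i + 1) := by
        rw [hL]
        simp only [List.take_succ_cons]
        rw [List.take_append_of_le_length hi]
      have h3 := hpos (i + 1) hi
      rw [h2]
      simp only [upCount_cons, if_true]
      omega
  rw [h1]
  have h2 : L.getD (D.length + 1) true = false := by
    have hsplit : L = (true :: D) ++ [false] := by simp [hL]
    rw [hsplit, List.getD_append_right _ _ _ _ (by simp)]
    simp
  have h3 : L.take (D.length + 1 + 1) = L := List.take_of_length_le (by omega)
  have hup : upCount L = upCount D + 1 := by rw [hL]; simp; omega
  have hp : (decide (L.getD (D.length + 1) true = false ∧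
      2 * upCount (L.take (D.length + 1 + 1)) = D.length + 1 + 1)) = true := by
    simp only [decide_eq_true_eq]
    exact ⟨h2, by rw [h3, hup]; omega⟩
  simp only [List.countP_cons, List.countP_nil, hp]
  simp
open DyckStep

/-- step to bool -/
def tb : DyckStep → Bool
  | U => true
  | D => false

/-- bool to step -/
def bs : Bool → DyckStep
  | true => U
  | false => D

@[simp] lemma tb_bs (b : Bool) : tb (bs b) = b := by cases b <;> rfl

lemma tb_injective : Function.Injective tb := by
  intro a b h
  cases a <;> cases b <;> simp [tb] at h ⊢

/-- DyckWord to list of bools -/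
def TB (p : DyckWord) : List Bool := p.toList.map tb

lemma length_count_split (m : List DyckStep) : m.length = m.count U + m.count D := by
  induction m with
  | nil => simp
  | cons s t ih => cases s <;> simp [List.count_cons, ih] <;> omega

lemma upCount_map_tb (l : List DyckStep) : upCount (l.map tb) = l.count U := by
  induction l with
  | nil => rfl
  | cons s t ih => cases s <;> simp [tb, List.count_cons, ih] <;> omega

lemma count_map_bs (L : List Bool) : (L.map bs).count U = upCount L := by
  induction L with
  | nil => rfl
  | cons b t ih => cases b <;> simp [bs, List.count_cons, ih] <;> omega

lemma TB_injective : Function.Injective TB := by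
  intro p q h
  exact DyckWord.ext ((List.map_injective_iff.mpr tb_injective) h)

@[simp] lemma length_TB (p : DyckWord) : (TB p).length = p.toList.length := by
  simp [TB]

@[simp] lemma take_TB (p : DyckWord) (i : ℕ) :
    (TB p).take i = (p.toList.take i).map tb := by
  simp [TB, List.map_take]

lemma upCount_take_TB (p : DyckWord) (i : ℕ) :
    upCount ((TB p).take i) = (p.toList.take i).count U := by
  rw [take_TB, upCount_map_tb]

lemma nonneg_TB (p : DyckWord) : ∀ i, i ≤ (TB p).length → i ≤ 2 * upCount ((TB p).take i) := by
  intro i hi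
  rw [length_TB] at hi
  rw [upCount_take_TB]
  have h1 := p.count_D_le_count_U i
  have h2 := length_count_split (p.toList.take i)
  rw [List.length_take] at h2
  omega

lemma isDyck_TB (p : DyckWord) : IsDyck p.semilength (TB p) := by
  refine ⟨?_, ?_, nonneg_TB p⟩
  · rw [length_TB, ← p.two_mul_semilength_eq_length]
  · rw [TB, upCount_map_tb]; rfl

lemma bal_TB (p : DyckWord) : 2 * upCount (TB p) = (TB p).length := by
  rw [length_TB, ← p.two_mul_semilength_eq_length, TB, upCount_map_tb]
  rfl

lemma exists_dyckWord {n : ℕ} {L : List Bool} (h : IsDyck n L) :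
    ∃ p : DyckWord, TB p = L ∧ p.semilength = n := by
  obtain ⟨hlen, hup, hpre⟩ := h
  have hcount : ∀ i, ((L.map bs).take i).count D ≤ ((L.map bs).take i).count U := by
    intro i
    have h1 : (L.map bs).take i = (L.take i).map bs := by rw [List.map_take]
    rw [h1, count_map_bs]
    have h2 := length_count_split ((L.take i).map bs)
    rw [count_map_bs, List.length_map] at h2
    have h3 : (L.take i).length ≤ 2 * upCount (L.take i) := by
      have h4 := hpre (min i L.length) (by omega)
      rw [← List.take_take, List.take_length] at h4
      rw [List.length_take]
      exact h4
    omega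
  have hbalance : (L.map bs).count U = (L.map bs).count D := by
    have h2 := length_count_split (L.map bs)
    rw [count_map_bs, hup, List.length_map] at h2
    rw [count_map_bs, hup]
    omega
  refine ⟨⟨L.map bs, hbalance, hcount⟩, ?_, ?_⟩
  · show (L.map bs).map tb = L
    rw [List.map_map]
    simp [Function.comp_def]
  · show (L.map bs).count U = n
    rw [count_map_bs, hup]

/-! ### Arch decomposition of Dyck words -/

/-- returns, on Dyck words -/
def retD (p : DyckWord) : ℕ := returns (TB p)

@[simp] lemma TB_zero : TB 0 = [] := rfl

@[simp] lemma retD_zero : retD 0 = 0 := rfl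

lemma TB_add (p q : DyckWord) : TB (p + q) = TB p ++ TB q := by
  show (p.toList ++ q.toList).map tb = _
  rw [List.map_append]
  rfl

lemma TB_nest (p : DyckWord) : TB p.nest = true :: (TB p ++ [false]) := by
  show ([U] ++ p.toList ++ [D]).map tb = _
  simp [TB, tb]

lemma retD_nest_add (p q : DyckWord) : retD (p.nest + q) = 1 + retD q := by
  have hbal : 2 * upCount (true :: (TB p ++ [false])) = (true :: (TB p ++ [false])).length := by
    have h1 := bal_TB p
    have h2 : upCount [false] = 0 := rfl
    rw [length_TB] at h1
    simp only [upCount_cons, upCount_append, List.length_cons, List.length_append, h2, if_true]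
    simp
    omega
  rw [retD, TB_add, TB_nest, returns_append _ _ hbal,
    returns_arch (TB p) (bal_TB p) (nonneg_TB p)]
  rfl

/-- concatenation of arches -/
def g (Ds : List DyckWord) : DyckWord := (Ds.map DyckWord.nest).sum

@[simp] lemma g_nil : g [] = 0 := rfl

lemma g_cons (E : DyckWord) (Ds : List DyckWord) : g (E :: Ds) = E.nest + g Ds := by
  simp [g]

lemma retD_g (Ds : List DyckWord) : retD (g Ds) = Ds.length := by
  induction Ds with
  | nil => simp
  | cons E t ih => rw [g_cons, retD_nest_add, ih, List.length_cons]; omega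

lemma sl_g (Ds : List DyckWord) :
    (g Ds).semilength = (Ds.map DyckWord.semilength).sum + Ds.length := by
  induction Ds with
  | nil => simp [g]
  | cons E t ih =>
    rw [g_cons, DyckWord.semilength_add, DyckWord.semilength_nest, ih]
    simp
    omega

lemma nest_add_ne_zero (E q : DyckWord) : E.nest + q ≠ 0 := by
  rw [← DyckWord.toList_ne_nil]
  show ([U] ++ E.toList ++ [D]) ++ q.toList ≠ []
  simp

lemma g_cons_ne_zero (E : DyckWord) (Ds : List DyckWord) : g (E :: Ds) ≠ 0 := by
  rw [g_cons]; exact nest_add_ne_zero E (g Ds)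

lemma nest_add_inj {E F E' F' : DyckWord} (h : E.nest + F = E'.nest + F') :
    E = E' ∧ F = F' := by
  constructor
  · have h1 := congrArg DyckWord.insidePart h
    rwa [DyckWord.insidePart_add DyckWord.nest_ne_zero, DyckWord.insidePart_nest,
      DyckWord.insidePart_add DyckWord.nest_ne_zero, DyckWord.insidePart_nest] at h1
  · have h1 := congrArg DyckWord.outsidePart h
    rwa [DyckWord.outsidePart_add DyckWord.nest_ne_zero, DyckWord.outsidePart_nest,
      DyckWord.outsidePart_add DyckWord.nest_ne_zero, DyckWord.outsidePart_nest,
      zero_add, zero_add] at h1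

lemma g_injective : Function.Injective g := by
  intro a b h
  induction a generalizing b with
  | nil =>
    cases b with
    | nil => rfl
    | cons E t => exact absurd h.symm (g_cons_ne_zero E t)
  | cons E t ih =>
    cases b with
    | nil => exact absurd h (g_cons_ne_zero E t)
    | cons F s =>
      rw [g_cons, g_cons] at h
      obtain ⟨h1, h2⟩ := nest_add_inj h
      rw [h1, ih h2]

lemma g_surjective_aux : ∀ m : ℕ, ∀ p : DyckWord, p.semilength = m → ∃ Ds, g Ds = p := by
  intro m
  induction m using Nat.strong_induction_on with
  | _ m ih =>
    intro p hp
    by_cases h : p = 0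
    · exact ⟨[], by simp [h]⟩
    · obtain ⟨Ds, hDs⟩ := ih p.outsidePart.semilength
        (hp ▸ DyckWord.semilength_outsidePart_lt h) p.outsidePart rfl
      exact ⟨p.insidePart :: Ds, by
        rw [g_cons, hDs, DyckWord.nest_insidePart_add_outsidePart h]⟩

lemma g_surjective (p : DyckWord) : ∃ Ds, g Ds = p := g_surjective_aux _ p rfl

/-! ### Counting -/

def V (k s : ℕ) : Set (List DyckWord) :=
  {Ds | Ds.length = k ∧ (Ds.map DyckWord.semilength).sum = s}

lemma finite_sl (m : ℕ) : {p : DyckWord | p.semilength = m}.Finite := by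
  have h : {p : DyckWord | p.semilength = m} =
      Set.range (Subtype.val : {p : DyckWord // p.semilength = m} → DyckWord) := by
    rw [Subtype.range_coe_subtype]
  rw [h]
  exact Set.finite_range _

lemma image_g_subset (k s : ℕ) : g '' V k s ⊆ {p : DyckWord | p.semilength = s + k} := by
  rintro _ ⟨Ds, ⟨hl, hs⟩, rfl⟩
  simp only [Set.mem_setOf_eq, sl_g, hl, hs]

lemma finite_V (k s : ℕ) : (V k s).Finite :=
  Set.Finite.of_finite_image ((finite_sl (s + k)).subset (image_g_subset k s))
    g_injective.injOn

lemma ncard_V_zero_succ (s : ℕ) : (V 0 (s + 1)).ncard = 0 := by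
  have h : V 0 (s + 1) = ∅ := by
    ext Ds
    simp only [V, Set.mem_setOf_eq, Set.mem_empty_iff_false, iff_false, not_and]
    intro hl
    rw [List.length_eq_zero_iff] at hl
    subst hl
    simp
  simp [h]

lemma sl_eq_zero {p : DyckWord} (h : p.semilength = 0) : p = 0 := by
  have h2 := p.two_mul_semilength_eq_length
  rw [h] at h2
  rw [← DyckWord.toList_eq_nil, ← List.length_eq_zero_iff]
  omega

lemma ncard_V_zero (k : ℕ) : (V k 0).ncard = 1 := by
  have h : V k 0 = {List.replicate k (0 : DyckWord)} := by
    ext Ds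
    simp only [V, Set.mem_setOf_eq, Set.mem_singleton_iff]
    constructor
    · rintro ⟨hl, hs⟩
      rw [List.eq_replicate_iff]
      refine ⟨hl, fun b hb => ?_⟩
      apply sl_eq_zero
      have hm : b.semilength ∈ Ds.map DyckWord.semilength := List.mem_map_of_mem hb
      exact List.sum_eq_zero_iff.mp hs _ hm
    · rintro rfl
      constructor
      · simp
      · simp
  rw [h, Set.ncard_singleton]

/-- merge the first two components -/
def hmerge : List DyckWord → List DyckWord
  | E :: F :: t => (E.nest + F) :: t
  | t => t

lemma ncard_V_rec (k s : ℕ) :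
    (V (k + 1) (s + 1)).ncard = (V k (s + 1)).ncard + (V (k + 2) s).ncard := by
  have hsplit : V (k + 1) (s + 1) =
      (fun Ds => (0 : DyckWord) :: Ds) '' V k (s + 1) ∪ hmerge '' V (k + 2) s := by
    ext Ds
    constructor
    · rintro ⟨hl, hs⟩
      cases Ds with
      | nil => rw [List.length_nil] at hl; omega
      | cons Dh t =>
        by_cases h0 : Dh = 0
        · left
          refine ⟨t, ⟨?_, ?_⟩, ?_⟩
          · rw [List.length_cons] at hl; omega
          · subst h0
            simpa using hs
          · rw [h0]
        · right
          refine ⟨Dh.insidePart :: Dh.outsidePart :: t, ⟨?_, ?_⟩, ?_⟩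
          · rw [List.length_cons] at hl ⊢
            rw [List.length_cons]
            omega
          · have ha := DyckWord.semilength_insidePart_add_semilength_outsidePart_add_one h0
            simp only [List.map_cons, List.sum_cons] at hs ⊢
            omega
          · show (Dh.insidePart.nest + Dh.outsidePart) :: t = Dh :: t
            rw [DyckWord.nest_insidePart_add_outsidePart h0]
    · rintro (⟨t, ⟨hl, hs⟩, rfl⟩ | ⟨t, ⟨hl, hs⟩, rfl⟩)
      · refine ⟨?_, ?_⟩
        · rw [List.length_cons]; omega
        · simpa using hs
      · cases t with
        | nil => rw [List.length_nil] at hl; omega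
        | cons E r =>
          cases r with
          | nil => rw [List.length_cons, List.length_nil] at hl; omega
          | cons F t' =>
            show ((E.nest + F) :: t') ∈ V (k + 1) (s + 1)
            refine ⟨?_, ?_⟩
            · rw [List.length_cons] at hl ⊢
              rw [List.length_cons] at hl
              omega
            · simp only [List.map_cons, List.sum_cons] at hs ⊢
              rw [DyckWord.semilength_add, DyckWord.semilength_nest]
              omega
  rw [hsplit]
  rw [Set.ncard_union_eq ?disj ((finite_V k (s+1)).image _) ((finite_V (k+2) s).image _)]
  case disj =>
    rw [Set.disjoint_left]
    rintro _ ⟨t, -, rfl⟩ ⟨r, ⟨hl, -⟩, hr⟩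
    cases r with
    | nil => rw [List.length_nil] at hl; omega
    | cons E r' =>
      cases r' with
      | nil => rw [List.length_cons, List.length_nil] at hl; omega
      | cons F t' =>
        have : (E.nest + F) :: t' = (0 : DyckWord) :: t := hr
        have h0 : E.nest + F = 0 := (List.cons_eq_cons.mp this).1
        exact nest_add_ne_zero E F h0
  congr 1
  · apply Set.ncard_image_of_injOn
    intro a _ b _ hab
    exact (List.cons_eq_cons.mp hab).2
  · apply Set.ncard_image_of_injOn
    rintro Ds ⟨hl, -⟩ Es ⟨hl', -⟩ he
    cases Ds with
    | nil => rw [List.length_nil] at hl; omega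
    | cons E r =>
      cases r with
      | nil => rw [List.length_cons, List.length_nil] at hl; omega
      | cons F t =>
        cases Es with
        | nil => rw [List.length_nil] at hl'; omega
        | cons E' r' =>
          cases r' with
          | nil => rw [List.length_cons, List.length_nil] at hl'; omega
          | cons F' t' =>
            have he' : (E.nest + F) :: t = (E'.nest + F') :: t' := he
            obtain ⟨h1, h2⟩ := List.cons_eq_cons.mp he'
            obtain ⟨hE, hF⟩ := nest_add_inj h1
            rw [hE, hF, h2]

/-! ### Closed form -/

lemma closed_form : ∀ s k : ℕ, (V (k + 1) s).ncard + (2 * s + k).choose (s + k + 1)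
    = (2 * s + k).choose s := by
  intro s
  induction s with
  | zero =>
    intro k
    rw [ncard_V_zero]
    rw [show 2 * 0 + k = k from by omega]
    rw [Nat.choose_eq_zero_of_lt (show k < k + 1 from by omega), Nat.choose_zero_right]
  | succ s ihs =>
    intro k
    induction k with
    | zero =>
      have hrec := ncard_V_rec 0 s
      have h0 := ncard_V_zero_succ s
      have h1 : (V (0 + 2) s).ncard + (2 * s + 1).choose (s + 2) = (2 * s + 1).choose s := by
        have := ihs 1
        rw [show (1 : ℕ) + 1 = 0 + 2 from by omega] at this
        rw [show s + 1 + 1 = s + 2 from by omega] at this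
        exact this
      have pas1 : (2 * (s + 1) + 0).choose (s + 1)
          = (2 * s + 1).choose s + (2 * s + 1).choose (s + 1) := by
        have := Nat.choose_succ_succ (2 * s + 1) s
        convert this using 2 <;> omega
      have pas2 : (2 * (s + 1) + 0).choose (s + 1 + 0 + 1)
          = (2 * s + 1).choose (s + 1) + (2 * s + 1).choose (s + 2) := by
        have := Nat.choose_succ_succ (2 * s + 1) (s + 1)
        convert this using 2 <;> omega
      omega
    | succ k ihk =>
      have hrec := ncard_V_rec (k + 1) s
      have h1 : (V (k + 1 + 2) s).ncard + (2 * s + k + 2).choose (s + k + 3)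
          = (2 * s + k + 2).choose s := by
        have := ihs (k + 2)
        rw [show k + 2 + 1 = k + 1 + 2 from by omega] at this
        rw [show 2 * s + (k + 2) = 2 * s + k + 2 from by omega] at this
        rw [show s + (k + 2) + 1 = s + k + 3 from by omega] at this
        exact this
      have h2 : (V (k + 1) (s + 1)).ncard + (2 * s + k + 2).choose (s + k + 2)
          = (2 * s + k + 2).choose (s + 1) := by
        have := ihk
        rw [show 2 * (s + 1) + k = 2 * s + k + 2 from by omega] at this
        rw [show s + 1 + k + 1 = s + k + 2 from by omega] at this
        exact this
      have pas1 : (2 * (s + 1) + (k + 1)).choose (s + 1)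
          = (2 * s + k + 2).choose s + (2 * s + k + 2).choose (s + 1) := by
        have := Nat.choose_succ_succ (2 * s + k + 2) s
        convert this using 2 <;> omega
      have pas2 : (2 * (s + 1) + (k + 1)).choose (s + 1 + (k + 1) + 1)
          = (2 * s + k + 2).choose (s + k + 2) + (2 * s + k + 2).choose (s + k + 3) := by
        have := Nat.choose_succ_succ (2 * s + k + 2) (s + k + 2)
        convert this using 2 <;> omega
      omega

theorem stmt7 (n k : ℕ) (hk : 1 ≤ k) (hkn : k ≤ n) :
    n * {L : List Bool | IsDyck n L ∧ returns L = k}.ncard =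
      k * Nat.choose (2 * n - k - 1) (n - 1) := by
  obtain ⟨k', rfl⟩ : ∃ k', k = k' + 1 := ⟨k - 1, by omega⟩
  have hset1 : {L : List Bool | IsDyck n L ∧ returns L = k' + 1}
      = TB '' {p : DyckWord | p.semilength = n ∧ retD p = k' + 1} := by
    ext L
    simp only [Set.mem_setOf_eq, Set.mem_image]
    constructor
    · rintro ⟨hd, hr⟩
      obtain ⟨p, hTB, hsl⟩ := exists_dyckWord hd
      exact ⟨p, ⟨hsl, by rw [retD, hTB]; exact hr⟩, hTB⟩
    · rintro ⟨p, ⟨hsl, hr⟩, rfl⟩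
      exact ⟨hsl ▸ isDyck_TB p, hr⟩
  have hset2 : {p : DyckWord | p.semilength = n ∧ retD p = k' + 1}
      = g '' V (k' + 1) (n - (k' + 1)) := by
    ext p
    simp only [Set.mem_setOf_eq, Set.mem_image]
    constructor
    · rintro ⟨hsl, hr⟩
      obtain ⟨Ds, rfl⟩ := g_surjective p
      have hlen : Ds.length = k' + 1 := by rw [← retD_g Ds]; exact hr
      have hsum := sl_g Ds
      exact ⟨Ds, ⟨hlen, by omega⟩, rfl⟩
    · rintro ⟨Ds, ⟨hlen, hsum⟩, rfl⟩
      constructor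
      · rw [sl_g, hlen, hsum]; omega
      · rw [retD_g, hlen]
  rw [hset1, Set.ncard_image_of_injOn TB_injective.injOn, hset2,
    Set.ncard_image_of_injOn g_injective.injOn]
  have hcf := closed_form (n - (k' + 1)) k'
  have e1 : 2 * (n - (k' + 1)) + k' = 2 * n - (k' + 1) - 1 := by omega
  have e2 : n - (k' + 1) + k' + 1 = n := by omega
  rw [e1, e2] at hcf
  have hsym : (2 * n - (k' + 1) - 1).choose (n - (k' + 1))
      = (2 * n - (k' + 1) - 1).choose (n - 1) := by
    rw [show n - (k' + 1) = 2 * n - (k' + 1) - 1 - (n - 1) from by omega,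
      Nat.choose_symm (by omega)]
  rw [hsym] at hcf
  have key := Nat.choose_succ_right_eq (2 * n - (k' + 1) - 1) (n - 1)
  rw [show n - 1 + 1 = n from by omega,
    show 2 * n - (k' + 1) - 1 - (n - 1) = n - (k' + 1) from by omega] at key
  set N := (V (k' + 1) (n - (k' + 1))).ncard with hN
  set A := (2 * n - (k' + 1) - 1).choose (n - 1) with hA
  set B := (2 * n - (k' + 1) - 1).choose n with hB
  have h4 : n * N + n * B = n * A := by rw [← Nat.mul_add, hcf]
  have h5 : A * (n - (k' + 1)) + A * (k' + 1) = A * n := by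
    rw [← Nat.mul_add, show n - (k' + 1) + (k' + 1) = n from by omega]
  have hc1 : n * B = B * n := Nat.mul_comm _ _
  have hc2 : n * A = A * n := Nat.mul_comm _ _
  have hc3 : (k' + 1) * A = A * (k' + 1) := Nat.mul_comm _ _
  omega
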